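/- Let X have distribution F with F̄ ∈ RV_{-α}, α > 1, and finite mean μ. Then the p-expectile satisfies e_p(X) ~ (α-1)^{-1/α} F^{←}(p) as p ↑ 1, i.e., lim_{p↑1} e_p(X)/F^{←}(p) = (α-1)^{-1/α}. -/

import Mathlib

open MeasureTheory Filter Set

lemma block_le {g : ℝ → ℝ} (ganti : Antitone g) {a b : ℝ} (hab : a ≤ b)
    (hint : IntegrableOn g (Ioc a b)) :
    ∫ s in Ioc a b, g s ≤ (b - a) * g a := by
  have h1 : ∫ s in Ioc a b, g s ≤ ∫ _s in Ioc a b, g a :=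
    setIntegral_mono_on hint (integrableOn_const measure_Ioc_lt_top.ne)
      measurableSet_Ioc (fun x hx => ganti hx.1.le)
  have h2 : ∫ _s in Ioc a b, g a = (b - a) * g a := by
    rw [setIntegral_const, measureReal_def, Real.volume_Ioc, ENNReal.toReal_ofReal (sub_nonneg.2 hab), smul_eq_mul]
  linarith [h1, h2.ge]

lemma blocks_sum {g : ℝ → ℝ} (hint : IntegrableOn g (Ioi (0:ℝ)))
    {t Λ : ℝ} (ht : 0 < t) (hΛ : 1 ≤ Λ) (N : ℕ) :
    ∫ s in Ioc t (t * Λ ^ N), g s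
      = ∑ n ∈ Finset.range N, ∫ s in Ioc (t * Λ ^ n) (t * Λ ^ (n + 1)), g s := by
  have hpow : ∀ n : ℕ, t ≤ t * Λ ^ n := fun n => le_mul_of_one_le_right ht.le (one_le_pow₀ hΛ)
  have hmono : ∀ n : ℕ, t * Λ ^ n ≤ t * Λ ^ (n+1) :=
    fun n => mul_le_mul_of_nonneg_left (pow_le_pow_right₀ hΛ (Nat.le_succ n)) ht.le
  induction N with
  | zero => simp
  | succ N ih =>
    have hsub : Ioc (t * Λ ^ N) (t * Λ ^ (N+1)) ⊆ Ioi (0:ℝ) :=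
      fun x hx => lt_of_lt_of_le ht (le_trans (hpow N) hx.1.le)
    have hsub' : Ioc t (t * Λ ^ N) ⊆ Ioi (0:ℝ) := fun x hx => lt_trans ht hx.1
    rw [Finset.sum_range_succ, ← ih, ← setIntegral_union (Ioc_disjoint_Ioc_of_le le_rfl)
        measurableSet_Ioc (hint.mono_set hsub') (hint.mono_set hsub),
      Ioc_union_Ioc_eq_Ioc (hpow N) (hmono N)]

lemma pow_decay {g : ℝ → ℝ} {Λ c T t : ℝ} (hc : ∀ s, T ≤ s → g (s * Λ) ≤ c * g s)
    (ht : T ≤ t) (hΛ : 1 ≤ Λ) (ht0 : 0 < t) (hc0 : 0 ≤ c) :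
    ∀ n : ℕ, g (t * Λ ^ n) ≤ c ^ n * g t := by
  intro n
  induction n with
  | zero => simp
  | succ n ih =>
    have h1 : T ≤ t * Λ ^ n := le_trans ht (le_mul_of_one_le_right ht0.le (one_le_pow₀ hΛ))
    have h2 := hc _ h1
    have he : t * Λ ^ (n+1) = (t * Λ ^ n) * Λ := by ring
    rw [he]
    calc g ((t * Λ ^ n) * Λ) ≤ c * g (t * Λ ^ n) := h2
    _ ≤ c * (c ^ n * g t) := by nlinarith
    _ = c ^ (n+1) * g t := by ring

lemma karamata_upper {g : ℝ → ℝ} (ganti : Antitone g) (gpos : ∀ t, 0 < g t)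
    (gint : IntegrableOn g (Ioi (0:ℝ))) {Λ c : ℝ} (hΛ : 1 < Λ) (hc0 : 0 ≤ c)
    (hΛc : Λ * c < 1) (h : ∀ᶠ t in atTop, g (t * Λ) ≤ c * g t) :
    ∀ᶠ t in atTop, ∫ s in Ioi t, g s ≤ t * g t * ((Λ - 1) * (1 - Λ * c)⁻¹) := by
  obtain ⟨T, hT⟩ := h.exists_forall_of_atTop
  filter_upwards [eventually_ge_atTop T, eventually_gt_atTop (0:ℝ)] with t htT ht0
  -- partial sums bound
  have hΛ1 : (1:ℝ) ≤ Λ := hΛ.le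
  have key : ∀ N : ℕ, ∫ s in Ioc t (t * Λ ^ N), g s
      ≤ t * g t * ((Λ - 1) * (1 - Λ * c)⁻¹) := by
    intro N
    rw [blocks_sum gint ht0 hΛ1 N]
    have hblock : ∀ n ∈ Finset.range N, ∫ s in Ioc (t * Λ ^ n) (t * Λ ^ (n + 1)), g s
        ≤ (t * (Λ - 1) * g t) * (Λ * c) ^ n := by
      intro n _
      have hab : t * Λ ^ n ≤ t * Λ ^ (n+1) :=
        mul_le_mul_of_nonneg_left (pow_le_pow_right₀ hΛ1 (Nat.le_succ n)) ht0.le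
      have hsub : Ioc (t * Λ ^ n) (t * Λ ^ (n+1)) ⊆ Ioi (0:ℝ) := fun x hx =>
        lt_of_lt_of_le (lt_of_lt_of_le ht0 (le_mul_of_one_le_right ht0.le (one_le_pow₀ hΛ1))) hx.1.le
      have h1 := block_le ganti hab (gint.mono_set hsub)
      have h2 : g (t * Λ ^ n) ≤ c ^ n * g t := pow_decay hT htT hΛ1 ht0 hc0 n
      have h3 : t * Λ ^ (n+1) - t * Λ ^ n = t * Λ ^ n * (Λ - 1) := by ring
      calc ∫ s in Ioc (t * Λ ^ n) (t * Λ ^ (n + 1)), g s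
          ≤ (t * Λ ^ (n+1) - t * Λ ^ n) * g (t * Λ ^ n) := h1
        _ ≤ (t * Λ ^ n * (Λ - 1)) * (c ^ n * g t) := by
            rw [h3]
            apply mul_le_mul_of_nonneg_left h2
            have hp : (0:ℝ) < Λ ^ n := pow_pos (lt_of_lt_of_le one_pos hΛ1) n
            nlinarith
        _ = (t * (Λ - 1) * g t) * (Λ * c) ^ n := by rw [mul_pow]; ring
    calc ∑ n ∈ Finset.range N, ∫ s in Ioc (t * Λ ^ n) (t * Λ ^ (n + 1)), g s
        ≤ ∑ n ∈ Finset.range N, (t * (Λ - 1) * g t) * (Λ * c) ^ n :=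
          Finset.sum_le_sum hblock
      _ = (t * (Λ - 1) * g t) * ∑ n ∈ Finset.range N, (Λ * c) ^ n := by
          rw [Finset.mul_sum]
      _ ≤ (t * (Λ - 1) * g t) * (1 - Λ * c)⁻¹ := by
          apply mul_le_mul_of_nonneg_left _ (mul_nonneg (mul_nonneg ht0.le (by linarith)) (gpos t).le)
          exact sum_le_hasSum _ (fun i _ => pow_nonneg (by positivity) i)
            (hasSum_geometric_of_lt_one (by positivity) hΛc)
      _ = t * g t * ((Λ - 1) * (1 - Λ * c)⁻¹) := by ring
  -- pass to the limit
  have hmono : Monotone (fun N : ℕ => Ioc t (t * Λ ^ N)) := by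
    intro n m hnm
    exact Ioc_subset_Ioc_right (mul_le_mul_of_nonneg_left (pow_le_pow_right₀ hΛ1 hnm) ht0.le)
  have hunion : ⋃ N : ℕ, Ioc t (t * Λ ^ N) = Ioi t := by
    apply Subset.antisymm
    · exact iUnion_subset fun N x hx => hx.1
    · intro x hx
      have : Tendsto (fun N : ℕ => t * Λ ^ N) atTop atTop :=
        (tendsto_pow_atTop_atTop_of_one_lt hΛ).const_mul_atTop ht0
      obtain ⟨N, hN⟩ := (this.eventually_ge_atTop x).exists
      exact mem_iUnion.2 ⟨N, hx, hN⟩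
  have hsubIoi : Ioi t ⊆ Ioi (0:ℝ) := Ioi_subset_Ioi ht0.le
  have hlim := tendsto_setIntegral_of_monotone (fun N => measurableSet_Ioc) hmono
    (by rw [hunion]; exact gint.mono_set hsubIoi)
  rw [hunion] at hlim
  exact le_of_tendsto hlim (Eventually.of_forall key)

lemma block_ge {g : ℝ → ℝ} (ganti : Antitone g) {a b : ℝ} (hab : a ≤ b)
    (hint : IntegrableOn g (Ioc a b)) :
    (b - a) * g b ≤ ∫ s in Ioc a b, g s := by
  have h1 : ∫ _s in Ioc a b, g b ≤ ∫ s in Ioc a b, g s :=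
    setIntegral_mono_on (integrableOn_const measure_Ioc_lt_top.ne) hint
      measurableSet_Ioc (fun x hx => ganti hx.2)
  have h2 : ∫ _s in Ioc a b, g b = (b - a) * g b := by
    rw [setIntegral_const, measureReal_def, Real.volume_Ioc, ENNReal.toReal_ofReal (sub_nonneg.2 hab), smul_eq_mul]
  linarith [h1, h2.le]

lemma karamata_lower {g : ℝ → ℝ} (ganti : Antitone g) (gpos : ∀ t, 0 < g t)
    (gint : IntegrableOn g (Ioi (0:ℝ))) {Λ : ℝ} (hΛ : 1 < Λ) (N : ℕ) (b : ℕ → ℝ)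
    (hb : ∀ n, 0 ≤ b n)
    (h : ∀ n ∈ Finset.range N, ∀ᶠ t in atTop, b n * g t ≤ g (t * Λ ^ (n+1))) :
    ∀ᶠ t in atTop, t * g t * ((Λ - 1) * ∑ n ∈ Finset.range N, Λ ^ n * b n)
      ≤ ∫ s in Ioi t, g s := by
  have hΛ1 : (1:ℝ) ≤ Λ := hΛ.le
  filter_upwards [eventually_gt_atTop (0:ℝ), (eventually_all_finset (Finset.range N)).2 h]
    with t ht0 hall
  have hsubIoi : Ioi t ⊆ Ioi (0:ℝ) := Ioi_subset_Ioi ht0.le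
  have hIocsub : Ioc t (t * Λ ^ N) ⊆ Ioi t := Ioc_subset_Ioi_self
  have h1 : ∫ s in Ioc t (t * Λ ^ N), g s ≤ ∫ s in Ioi t, g s :=
    setIntegral_mono_set (gint.mono_set hsubIoi)
      (Eventually.of_forall fun x => (gpos x).le) (HasSubset.Subset.eventuallyLE hIocsub)
  rw [blocks_sum gint ht0 hΛ1 N] at h1
  refine le_trans ?_ h1
  have hblock : ∀ n ∈ Finset.range N,
      (t * g t) * ((Λ - 1) * (Λ ^ n * b n)) ≤ ∫ s in Ioc (t * Λ ^ n) (t * Λ ^ (n + 1)), g s := by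
    intro n hn
    have hab : t * Λ ^ n ≤ t * Λ ^ (n+1) :=
      mul_le_mul_of_nonneg_left (pow_le_pow_right₀ hΛ1 (Nat.le_succ n)) ht0.le
    have hsub : Ioc (t * Λ ^ n) (t * Λ ^ (n+1)) ⊆ Ioi (0:ℝ) := fun x hx =>
      lt_of_lt_of_le (lt_of_lt_of_le ht0 (le_mul_of_one_le_right ht0.le (one_le_pow₀ hΛ1))) hx.1.le
    have h2 := block_ge ganti hab (gint.mono_set hsub)
    have h3 := hall n hn
    have h4 : t * Λ ^ (n+1) - t * Λ ^ n = t * Λ ^ n * (Λ - 1) := by ring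
    have hp : (0:ℝ) < Λ ^ n := pow_pos (lt_of_lt_of_le one_pos hΛ1) n
    calc (t * g t) * ((Λ - 1) * (Λ ^ n * b n)) = (t * Λ ^ n * (Λ - 1)) * (b n * g t) := by ring
      _ ≤ (t * Λ ^ n * (Λ - 1)) * g (t * Λ ^ (n+1)) := by
          apply mul_le_mul_of_nonneg_left h3; nlinarith
      _ = (t * Λ ^ (n+1) - t * Λ ^ n) * g (t * Λ ^ (n+1)) := by rw [h4]
      _ ≤ _ := h2
  calc t * g t * ((Λ - 1) * ∑ n ∈ Finset.range N, Λ ^ n * b n)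
      = ∑ n ∈ Finset.range N, (t * g t) * ((Λ - 1) * (Λ ^ n * b n)) := by
        rw [← Finset.mul_sum, ← Finset.mul_sum]
    _ ≤ _ := Finset.sum_le_sum hblock

lemma slope_limit {α : ℝ} (hα : 1 < α) :
    Tendsto (fun Λ : ℝ => (Λ - 1) / (1 - Λ ^ ((1:ℝ) - α))) (nhdsWithin 1 (Ioi 1))
      (nhds (1 / (α - 1))) := by
  have hd : HasDerivAt (fun x : ℝ => x ^ ((1:ℝ) - α)) (1 - α) 1 := by
    have h := Real.hasDerivAt_rpow_const (x := 1) (p := (1:ℝ) - α) (Or.inl one_ne_zero)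
    simpa using h
  have hs := hasDerivAt_iff_tendsto_slope.mp hd
  have hs' : Tendsto (slope (fun x : ℝ => x ^ ((1:ℝ) - α)) 1) (nhdsWithin 1 (Ioi 1))
      (nhds (1 - α)) := hs.mono_left (nhdsWithin_mono 1 (fun x hx => ne_of_gt hx))
  have hneg : Tendsto (fun Λ : ℝ => -(slope (fun x : ℝ => x ^ ((1:ℝ) - α)) 1 Λ))
      (nhdsWithin 1 (Ioi 1)) (nhds (α - 1)) := by
    have := hs'.neg; simpa [neg_sub] using this
  have hinv := hneg.inv₀ (ne_of_gt (by linarith))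
  rw [show (1 / (α - 1)) = (α - 1)⁻¹ by rw [one_div]]
  apply hinv.congr'
  filter_upwards [self_mem_nhdsWithin] with Λ (hΛ : Λ ∈ Ioi 1)
  rw [slope_def_field]
  rw [Real.one_rpow]
  rw [← neg_div, neg_sub, inv_div]

lemma choose_upper {α L b : ℝ} (hα : 1 < α) (hL : L = 1 / (α - 1)) (hb : L < b) :
    ∃ Λ c : ℝ, 1 < Λ ∧ Λ ^ (-α) < c ∧ Λ * c < 1 ∧ (Λ - 1) * (1 - Λ * c)⁻¹ < b := by
  have hLpos : 0 < L := by have : 0 < α - 1 := by linarith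
                           rw [hL]; positivity
  have h1 := (slope_limit hα).eventually (eventually_lt_nhds (show 1/(α-1) < (L+b)/2 by
    rw [← hL]; linarith))
  obtain ⟨Λ, hA, hΛmem⟩ := (h1.and self_mem_nhdsWithin).exists
  have hΛ1 : 1 < Λ := hΛmem
  have hΛ0 : (0:ℝ) < Λ := by linarith
  have hΛα : Λ ^ ((1:ℝ) - α) < 1 := Real.rpow_lt_one_of_one_lt_of_neg hΛ1 (by linarith)
  have hmulid : Λ * Λ ^ (-α) = Λ ^ ((1:ℝ) - α) := by
    rw [show (1:ℝ) - α = 1 + (-α) by ring, Real.rpow_add hΛ0, Real.rpow_one]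
  -- continuity in u at u₀ = Λ ^ (-α)
  set u₀ := Λ ^ (-α) with hu₀
  have hu₀pos : 0 < u₀ := Real.rpow_pos_of_pos hΛ0 _
  have hφcont : ContinuousAt (fun u : ℝ => (Λ - 1) * (1 - Λ * u)⁻¹) u₀ := by
    apply ContinuousAt.mul continuousAt_const
    apply ContinuousAt.inv₀ (by fun_prop)
    rw [hmulid]; intro h; rw [sub_eq_zero] at h; exact absurd h.symm (ne_of_lt hΛα)
  have hφval : (Λ - 1) * (1 - Λ * u₀)⁻¹ < b := by
    rw [hmulid]
    calc (Λ - 1) * (1 - Λ ^ ((1:ℝ) - α))⁻¹ = (Λ - 1) / (1 - Λ ^ ((1:ℝ) - α)) := by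
          rw [div_eq_mul_inv]
      _ < (L + b)/2 := hA
      _ < b := by linarith
  have hcont2 : ContinuousAt (fun u : ℝ => Λ * u) u₀ := by fun_prop
  have hΛu₀ : Λ * u₀ < 1 := by rw [hmulid]; exact hΛα
  have hev : ∀ᶠ u in nhdsWithin u₀ (Ioi u₀),
      (Λ - 1) * (1 - Λ * u)⁻¹ < b ∧ Λ * u < 1 := by
    apply Eventually.filter_mono nhdsWithin_le_nhds
    exact (hφcont.eventually (eventually_lt_nhds hφval)).and
      (hcont2.eventually (eventually_lt_nhds hΛu₀))
  obtain ⟨c, hc1, (hc2 : u₀ < c)⟩ := (hev.and self_mem_nhdsWithin).exists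
  exact ⟨Λ, c, hΛ1, hc2, hc1.2, hc1.1⟩

lemma term_eq {Λ : ℝ} (hΛ0 : 0 < Λ) (α : ℝ) (n : ℕ) :
    Λ ^ n * ((Λ ^ (n+1) : ℝ)) ^ (-α) = Λ ^ (-α) * (Λ ^ ((1:ℝ) - α)) ^ n := by
  have h1 : (Λ ^ (n+1) : ℝ) ^ (-α) = Λ ^ (((n:ℝ) + 1) * (-α)) := by
    rw [← Real.rpow_natCast Λ (n+1), ← Real.rpow_mul hΛ0.le]
    push_cast; ring_nf
  have h2 : (Λ ^ ((1:ℝ) - α)) ^ n = Λ ^ (((1:ℝ) - α) * n) := by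
    rw [← Real.rpow_natCast (Λ ^ ((1:ℝ) - α)) n, ← Real.rpow_mul hΛ0.le]
  rw [h1, h2, ← Real.rpow_natCast Λ n, ← Real.rpow_add hΛ0, ← Real.rpow_add hΛ0]
  ring_nf

lemma choose_lower {α L a : ℝ} (hα : 1 < α) (hL : L = 1 / (α - 1)) (ha : a < L) :
    ∃ (Λ : ℝ) (N : ℕ) (b : ℕ → ℝ), 1 < Λ ∧ (∀ n, 0 ≤ b n) ∧
      (∀ n, b n < ((Λ ^ (n+1) : ℝ)) ^ (-α)) ∧
      a < (Λ - 1) * ∑ n ∈ Finset.range N, Λ ^ n * b n := by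
  -- Step 1 : choose Λ
  have hcont : Tendsto (fun Λ : ℝ => Λ ^ (-α)) (nhdsWithin 1 (Ioi 1)) (nhds 1) := by
    have h := (Real.continuousAt_rpow_const 1 (-α) (Or.inl one_ne_zero)).continuousWithinAt
      (s := Ioi 1)
    have h2 : Tendsto (fun Λ : ℝ => Λ ^ (-α)) (nhdsWithin 1 (Ioi 1)) (nhds ((1:ℝ) ^ (-α))) := h
    simpa using h2
  have hmul : Tendsto (fun Λ : ℝ => Λ ^ (-α) * ((Λ - 1) / (1 - Λ ^ ((1:ℝ) - α))))
      (nhdsWithin 1 (Ioi 1)) (nhds L) := by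
    have := hcont.mul (slope_limit hα)
    simpa [hL] using this
  have h1 := hmul.eventually (eventually_gt_nhds (show a < L by linarith))
  obtain ⟨Λ, hA, hΛmem⟩ := (h1.and self_mem_nhdsWithin).exists
  have hΛ1 : (1:ℝ) < Λ := hΛmem
  have hΛ0 : (0:ℝ) < Λ := by linarith
  have hΛα : Λ ^ ((1:ℝ) - α) < 1 := Real.rpow_lt_one_of_one_lt_of_neg hΛ1 (by linarith)
  have hr0 : (0:ℝ) ≤ Λ ^ ((1:ℝ) - α) := (Real.rpow_pos_of_pos hΛ0 _).le
  -- Step 2 : choose N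
  have hsum : HasSum (fun n : ℕ => Λ ^ (-α) * (Λ ^ ((1:ℝ) - α)) ^ n)
      (Λ ^ (-α) * (1 - Λ ^ ((1:ℝ) - α))⁻¹) :=
    (hasSum_geometric_of_lt_one hr0 hΛα).mul_left _
  have heq : (Λ - 1) * (Λ ^ (-α) * (1 - Λ ^ ((1:ℝ) - α))⁻¹)
      = Λ ^ (-α) * ((Λ - 1) / (1 - Λ ^ ((1:ℝ) - α))) := by
    rw [div_eq_mul_inv]; ring
  have htend : Tendsto (fun N : ℕ => (Λ - 1) * ∑ n ∈ Finset.range N,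
      Λ ^ (-α) * (Λ ^ ((1:ℝ) - α)) ^ n) atTop
      (nhds (Λ ^ (-α) * ((Λ - 1) / (1 - Λ ^ ((1:ℝ) - α))))) := by
    rw [← heq]
    exact (hsum.tendsto_sum_nat.const_mul _)
  obtain ⟨N, hN⟩ := (htend.eventually (eventually_gt_nhds hA)).exists
  -- hN : a < (Λ - 1) * ∑ ...
  -- Step 3 : choose ε and b
  set P := ∑ n ∈ Finset.range N, Λ ^ n with hP
  have hPpos : 0 ≤ P := Finset.sum_nonneg fun n _ => (pow_pos hΛ0 n).le
  set ε := (((Λ - 1) * ∑ n ∈ Finset.range N, Λ ^ (-α) * (Λ ^ ((1:ℝ) - α)) ^ n) - a)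
      / ((Λ - 1) * P + 1) with hε
  have hεpos : 0 < ε := by
    apply div_pos (by linarith) (by nlinarith)
  refine ⟨Λ, N, fun n => max (((Λ ^ (n+1) : ℝ)) ^ (-α) - ε) 0, hΛ1,
    fun n => le_max_right _ _, fun n => ?_, ?_⟩
  · apply max_lt (by linarith) (Real.rpow_pos_of_pos (pow_pos hΛ0 _) _)
  · have hterm : ∀ n ∈ Finset.range N,
        Λ ^ n * (((Λ ^ (n+1) : ℝ)) ^ (-α) - ε) ≤ Λ ^ n * max (((Λ ^ (n+1) : ℝ)) ^ (-α) - ε) 0 :=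
      fun n _ => mul_le_mul_of_nonneg_left (le_max_left _ _) (pow_pos hΛ0 n).le
    have hsum2 : ∑ n ∈ Finset.range N, Λ ^ n * (((Λ ^ (n+1) : ℝ)) ^ (-α) - ε)
        = (∑ n ∈ Finset.range N, Λ ^ (-α) * (Λ ^ ((1:ℝ) - α)) ^ n) - ε * P := by
      have hPe : ε * P = ∑ n ∈ Finset.range N, ε * Λ ^ n := by rw [hP, Finset.mul_sum]
      rw [hPe, ← Finset.sum_sub_distrib]
      exact Finset.sum_congr rfl fun n _ => by rw [mul_sub, term_eq hΛ0 α n]; ring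
    have hchain : a < (Λ - 1) * ((∑ n ∈ Finset.range N, Λ ^ (-α) * (Λ ^ ((1:ℝ) - α)) ^ n) - ε * P) := by
      have hεP : ε * ((Λ - 1) * P) < ((Λ - 1) * ∑ n ∈ Finset.range N, Λ ^ (-α) * (Λ ^ ((1:ℝ) - α)) ^ n) - a := by
        rw [hε]
        rw [div_mul_eq_mul_div, div_lt_iff₀ (by nlinarith)]
        nlinarith
      nlinarith
    calc a < (Λ - 1) * ((∑ n ∈ Finset.range N, Λ ^ (-α) * (Λ ^ ((1:ℝ) - α)) ^ n) - ε * P) := hchain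
      _ = (Λ - 1) * ∑ n ∈ Finset.range N, Λ ^ n * (((Λ ^ (n+1) : ℝ)) ^ (-α) - ε) := by
          rw [hsum2]
      _ ≤ _ := mul_le_mul_of_nonneg_left (Finset.sum_le_sum hterm) (by linarith)

lemma karamata {α : ℝ} (hα : 1 < α) {g : ℝ → ℝ} (ganti : Antitone g)
    (gpos : ∀ t, 0 < g t) (gint : IntegrableOn g (Ioi (0:ℝ)))
    (grv : ∀ x : ℝ, 0 < x → Tendsto (fun t => g (t * x) / g t) atTop (nhds (x ^ (-α)))) :
    Tendsto (fun t => (∫ s in Ioi t, g s) / (t * g t)) atTop (nhds (1 / (α - 1))) := by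
  rw [tendsto_order]
  constructor
  · -- lower
    intro a ha
    obtain ⟨Λ, N, b, hΛ1, hb0, hblt, hsum⟩ := choose_lower hα rfl ha
    have hΛ0 : (0:ℝ) < Λ := by linarith
    have hev : ∀ n ∈ Finset.range N, ∀ᶠ t in atTop, b n * g t ≤ g (t * Λ ^ (n+1)) := by
      intro n _
      have hx : (0:ℝ) < Λ ^ (n+1) := pow_pos hΛ0 _
      have h1 := (grv _ hx).eventually (eventually_gt_nhds (hblt n))
      filter_upwards [h1] with t ht
      have hg := gpos t
      rw [lt_div_iff₀ hg] at ht
      exact ht.le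
    filter_upwards [karamata_lower ganti gpos gint hΛ1 N b hb0 hev,
      eventually_gt_atTop (0:ℝ)] with t hlow ht0
    have htg : 0 < t * g t := mul_pos ht0 (gpos t)
    rw [lt_div_iff₀ htg]
    calc a * (t * g t) < ((Λ - 1) * ∑ n ∈ Finset.range N, Λ ^ n * b n) * (t * g t) := by
          apply mul_lt_mul_of_pos_right hsum htg
      _ = t * g t * ((Λ - 1) * ∑ n ∈ Finset.range N, Λ ^ n * b n) := by ring
      _ ≤ _ := hlow
  · -- upper
    intro bb hbb
    obtain ⟨Λ, c, hΛ1, hcgt, hΛc, hlt⟩ := choose_upper hα rfl hbb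
    have hΛ0 : (0:ℝ) < Λ := by linarith
    have hc0 : 0 ≤ c := le_of_lt (lt_of_lt_of_le (Real.rpow_pos_of_pos hΛ0 _) hcgt.le)
    have hev : ∀ᶠ t in atTop, g (t * Λ) ≤ c * g t := by
      have h1 := (grv Λ hΛ0).eventually (eventually_lt_nhds hcgt)
      filter_upwards [h1] with t ht
      have hg := gpos t
      rw [div_lt_iff₀ hg] at ht
      exact ht.le
    filter_upwards [karamata_upper ganti gpos gint hΛ1 hc0 hΛc hev,
      eventually_gt_atTop (0:ℝ)] with t hup ht0
    have htg : 0 < t * g t := mul_pos ht0 (gpos t)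
    rw [div_lt_iff₀ htg]
    calc (∫ s in Ioi t, g s) ≤ t * g t * ((Λ - 1) * (1 - Λ * c)⁻¹) := hup
      _ < bb * (t * g t) := by nlinarith

example (e : ℝ) : MeasurePreserving (fun x : ℝ => x + e) volume volume :=
  measurePreserving_add_right volume e
example (e : ℝ) : MeasurableEmbedding (fun x : ℝ => x + e) :=
  (MeasurableEquiv.addRight e).measurableEmbedding

lemma G_integrableOn (ν : Measure ℝ) [IsProbabilityMeasure ν]
    (hxint : Integrable (fun x : ℝ => x) ν) :
    IntegrableOn (fun s : ℝ => (ν (Ioi s)).toReal) (Ioi (0:ℝ)) := by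
  have hmeas : Measurable fun s : ℝ => ν (Ioi s) :=
    Antitone.measurable (fun a b hab => measure_mono (Ioi_subset_Ioi hab))
  have layer := lintegral_eq_lintegral_meas_lt ν (f := fun x => max x 0)
    (Eventually.of_forall fun x => le_max_right _ _)
    ((measurable_id.max measurable_const).aemeasurable)
  have hsets : ∫⁻ t in Ioi (0:ℝ), ν {a : ℝ | t < max a 0} = ∫⁻ t in Ioi (0:ℝ), ν (Ioi t) := by
    apply setLIntegral_congr_fun measurableSet_Ioi
    intro t ht
    dsimp only
    congr 1
    ext a
    simp only [mem_setOf_eq, mem_Ioi, lt_max_iff]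
    exact ⟨fun h => h.resolve_right (not_lt.2 (le_of_lt ht)), fun h => Or.inl h⟩
  have hfin : ∫⁻ t in Ioi (0:ℝ), ν (Ioi t) ≠ ⊤ := by
    rw [← hsets, ← layer]
    have hle : ∫⁻ x, ENNReal.ofReal (max x 0) ∂ν ≤ ∫⁻ x, (‖x‖₊ : ENNReal) ∂ν := by
      apply lintegral_mono
      intro x
      calc ENNReal.ofReal (max x 0) ≤ ENNReal.ofReal |x| :=
            ENNReal.ofReal_le_ofReal (max_le (le_abs_self x) (abs_nonneg x))
        _ = (‖x‖₊ : ENNReal) := (Real.enorm_eq_ofReal_abs x).symm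
    exact (lt_of_le_of_lt hle hxint.2).ne
  exact integrable_toReal_of_lintegral_ne_top hmeas.aemeasurable hfin

lemma tail_eq (ν : Measure ℝ) [IsProbabilityMeasure ν]
    (hxint : Integrable (fun x : ℝ => x) ν) (e : ℝ) :
    ∫ x, max (x - e) 0 ∂ν = ∫ s in Ioi e, (ν (Ioi s)).toReal := by
  have hint : Integrable (fun x => max (x - e) 0) ν :=
    (hxint.sub (integrable_const e)).pos_part
  have key := hint.integral_eq_integral_meas_lt (Eventually.of_forall fun x => le_max_right _ _)
  rw [key]; simp only [measureReal_def]
  have hset : ∀ t ∈ Ioi (0:ℝ),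
      (ν {a : ℝ | t < max (a - e) 0}).toReal = (fun s => (ν (Ioi s)).toReal) (t + e) := by
    intro t ht
    congr 2
    ext a
    simp only [mem_setOf_eq, mem_Ioi, lt_max_iff]
    constructor
    · rintro (h | h)
      · linarith
      · exact absurd h (not_lt.2 (le_of_lt ht))
    · intro h; exact Or.inl (by linarith)
  rw [setIntegral_congr_fun measurableSet_Ioi hset]
  have hmp : MeasurePreserving (fun x : ℝ => x + e) volume volume :=
    measurePreserving_add_right volume e
  have hemb : MeasurableEmbedding (fun x : ℝ => x + e) :=
    (MeasurableEquiv.addRight e).measurableEmbedding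
  have hpre : (fun x : ℝ => x + e) ⁻¹' (Ioi e) = Ioi 0 := by
    ext x; simp [mem_Ioi]
  rw [← hpre]
  exact hmp.setIntegral_preimage_emb hemb (fun s => (ν (Ioi s)).toReal) (Ioi e)

set_option maxHeartbeats 2000000 in
theorem expectile_first_order (ν : Measure ℝ) [IsProbabilityMeasure ν]
    (hsupp : ν (Iio 0) = 0)
    (α : ℝ) (hα : 1 < α) (hxint : Integrable (fun x : ℝ => x) ν)
    (hpos : ∀ t : ℝ, 0 < (ν (Ioi t)).toReal)
    (hrv : ∀ x : ℝ, 0 < x → Tendsto (fun t : ℝ =>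
        (ν (Ioi (t * x))).toReal / (ν (Ioi t)).toReal) atTop (nhds (x ^ (-α))))
    (e : ℝ → ℝ)
    (he : ∀ p ∈ Ioo (0 : ℝ) 1, e p - ∫ x, x ∂ν
      = ((2 * p - 1) / (1 - p)) * ∫ x, max (x - e p) 0 ∂ν) :
    Tendsto (fun p : ℝ => e p / sInf {x : ℝ | p ≤ (ν (Iic x)).toReal})
      (nhdsWithin 1 (Iio 1)) (nhds ((α - 1) ^ (-(1 / α)))) := by
  have hα0 : (0:ℝ) < α - 1 := by linarith
  set G : ℝ → ℝ := fun t => (ν (Ioi t)).toReal with hGdef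
  set F : ℝ → ℝ := fun t => (ν (Iic t)).toReal with hFdef
  set q : ℝ → ℝ := fun p => sInf {x : ℝ | p ≤ F x} with hqdef
  set μ0 : ℝ := ∫ x, x ∂ν with hμ0def
  -- basic facts
  have hμ0 : 0 ≤ μ0 := by
    apply integral_nonneg_of_ae
    have h0 : ∀ᵐ x ∂ν, x ∉ Iio 0 := by
      rw [ae_iff]
      convert hsupp using 2; ext x; simp
    filter_upwards [h0] with x hx
    simpa using hx
  have hGanti : Antitone G := fun a b hab =>
    ENNReal.toReal_mono (measure_ne_top ν _) (measure_mono (Ioi_subset_Ioi hab))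
  have hGint : IntegrableOn G (Ioi (0:ℝ)) := G_integrableOn ν hxint
  have hFmono : Monotone F := fun a b hab =>
    ENNReal.toReal_mono (measure_ne_top ν _) (measure_mono (Iic_subset_Iic.2 hab))
  have hFG : ∀ x, F x + G x = 1 := by
    intro x
    have h1 : ν (Iic x) + ν (Ioi x) = 1 := by
      rw [← measure_union (Iic_disjoint_Ioi le_rfl) measurableSet_Ioi, Iic_union_Ioi]
      exact measure_univ
    have h2 := congrArg ENNReal.toReal h1
    rwa [ENNReal.toReal_add (measure_ne_top ν _) (measure_ne_top ν _), ENNReal.toReal_one] at h2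
  have hkar : Tendsto (fun t => (∫ s in Ioi t, G s) / (t * G t)) atTop (nhds (1/(α-1))) :=
    karamata hα hGanti hpos hGint hrv
  -- positivity of tail integrals
  have hUpos : ∀ er : ℝ, 0 ≤ er → 0 < ∫ s in Ioi er, G s := by
    intro er her
    have hint1 : IntegrableOn G (Ioi er) := hGint.mono_set (Ioi_subset_Ioi her)
    have h2 : ((er+1) - er) * G (er+1) ≤ ∫ s in Ioc er (er+1), G s :=
      block_ge hGanti (by linarith) (hint1.mono_set Ioc_subset_Ioi_self)
    have h3 : ∫ s in Ioc er (er+1), G s ≤ ∫ s in Ioi er, G s :=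
      setIntegral_mono_set hint1 (Eventually.of_forall fun x => ENNReal.toReal_nonneg)
        (HasSubset.Subset.eventuallyLE Ioc_subset_Ioi_self)
    have := hpos (er+1)
    have he1 : ((er+1) - er) * G (er+1) = G (er+1) := by ring
    rw [he1] at h2
    linarith
  -- rearranged expectile equation
  have heq : ∀ p ∈ Ioo (0:ℝ) 1, (1 - p) * (e p - μ0) = (2*p - 1) * ∫ s in Ioi (e p), G s := by
    intro p hp
    have h := he p hp
    rw [tail_eq ν hxint (e p)] at h
    rw [div_mul_eq_mul_div, eq_div_iff (ne_of_gt (by linarith [hp.2] : (0:ℝ) < 1 - p))] at h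
    linarith
  -- e p ≥ μ0 for p ≥ 1/2
  have hemu : ∀ p ∈ Ioo (0:ℝ) 1, 1/2 ≤ p → μ0 ≤ e p := by
    intro p hp hhalf
    have h := he p hp
    have hI : 0 ≤ ∫ x, max (x - e p) 0 ∂ν := integral_nonneg (fun x => le_max_right _ _)
    have hcoef : 0 ≤ (2*p-1)/(1-p) := div_nonneg (by linarith) (by linarith [hp.2])
    nlinarith
  -- membership eventualities
  have hmem34 : Ioo (3/4 : ℝ) 1 ∈ nhdsWithin (1:ℝ) (Iio 1) :=
    Ioo_mem_nhdsLT (by norm_num)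
  have h1p : Tendsto (fun p : ℝ => 1 - p) (nhdsWithin 1 (Iio 1)) (nhds 0) := by
    have h : Tendsto (fun p : ℝ => 1 - p) (nhds 1) (nhds 0) := by
      simpa using (continuous_sub_left (1:ℝ)).tendsto 1
    exact h.mono_left nhdsWithin_le_nhds
  -- e tends to infinity
  have hetop : Tendsto e (nhdsWithin 1 (Iio 1)) atTop := by
    rw [tendsto_atTop]
    intro M
    set M' := max M 1 with hM'
    have hM'1 : (1:ℝ) ≤ M' := le_max_right M 1
    have hK : 0 < ∫ s in Ioi M', G s := hUpos M' (by linarith)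
    set K := ∫ s in Ioi M', G s with hKdef
    have hev1 : ∀ᶠ p in nhdsWithin (1:ℝ) (Iio 1), (1-p) * (|M' - μ0| + 1) < K/2 := by
      have := (h1p.mul_const (|M' - μ0| + 1)).eventually (eventually_lt_nhds
        (show (0:ℝ) * (|M' - μ0| + 1) < K/2 by simpa using half_pos hK))
      simpa using this
    filter_upwards [hev1, hmem34] with p hp1 hp2
    by_contra hMe
    push_neg at hMe
    have hpIoo : p ∈ Ioo (0:ℝ) 1 := ⟨by linarith [hp2.1], hp2.2⟩
    have hμe := hemu p hpIoo (by linarith [hp2.1])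
    have he0 : 0 ≤ e p := le_trans hμ0 hμe
    have heM' : e p ≤ M' := le_trans hMe.le (le_max_left M 1)
    have hq := heq p hpIoo
    have hUK : K ≤ ∫ s in Ioi (e p), G s := by
      apply setIntegral_mono_set (hGint.mono_set (Ioi_subset_Ioi he0))
        (Eventually.of_forall fun x => ENNReal.toReal_nonneg)
        (HasSubset.Subset.eventuallyLE (Ioi_subset_Ioi heM'))
    have habs : M' - μ0 ≤ |M' - μ0| := le_abs_self _
    have h34 : (3/4:ℝ) < p := hp2.1
    have hplt : p < 1 := hp2.2
    nlinarith
  -- quantile facts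
  have hSne : ∀ p : ℝ, p < 1 → {x : ℝ | p ≤ F x}.Nonempty := by
    intro p hp
    have htend : Tendsto F atTop (nhds 1) := by
      have h1 : Tendsto (fun x : ℝ => ν (Iic x)) atTop (nhds (ν univ)) :=
        tendsto_measure_Iic_atTop ν
      have h2 := (ENNReal.tendsto_toReal (by simp : ν univ ≠ ⊤)).comp h1
      simpa [hFdef, Function.comp_def] using h2
    obtain ⟨x, hx⟩ := (htend.eventually (eventually_gt_nhds hp)).exists
    exact ⟨x, hx.le⟩
  have hSbdd : ∀ p : ℝ, 0 < p → ∀ x ∈ {x : ℝ | p ≤ F x}, (0:ℝ) ≤ x := by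
    intro p hp x hx
    by_contra hneg
    push_neg at hneg
    have hsub : Iic x ⊆ Iio 0 := fun y hy => lt_of_le_of_lt hy hneg
    have : F x ≤ 0 := by
      have := measure_mono (μ := ν) hsub
      rw [hsupp] at this
      simp only [hFdef]
      simpa using ENNReal.toReal_mono (by simp) this
    exact absurd (le_trans hx.out this) (not_le.2 hp)
  have hFq : ∀ p ∈ Ioo (0:ℝ) 1, p ≤ F (q p) := by
    intro p hp
    have hne := hSne p hp.2
    have hbdd : BddBelow {x : ℝ | p ≤ F x} := ⟨0, fun x hx => hSbdd p hp.1 x hx⟩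
    have hInt : ⋂ n : ℕ, Iic (q p + 1/(n+1)) = Iic (q p) := by
      ext x
      simp only [mem_iInter, mem_Iic]
      constructor
      · intro h
        by_contra hx
        push_neg at hx
        obtain ⟨n, hn⟩ := exists_nat_one_div_lt (show (0:ℝ) < x - q p by linarith)
        linarith [h n]
      · intro h n
        have : 0 < 1/((n:ℝ)+1) := by positivity
        linarith
    have hseq : Tendsto (fun n : ℕ => ν (Iic (q p + 1/(n+1)))) atTop (nhds (ν (Iic (q p)))) := by
      rw [← hInt]
      apply tendsto_measure_iInter_atTop
        (fun n => measurableSet_Iic.nullMeasurableSet)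
        (fun n m hnm => Iic_subset_Iic.2 (by
          have : 1/((m:ℝ)+1) ≤ 1/((n:ℝ)+1) := by
            apply one_div_le_one_div_of_le (by positivity)
            exact_mod_cast add_le_add_left (Nat.cast_le.2 hnm) 1
          linarith))
        ⟨0, measure_ne_top _ _⟩
    have htoReal : Tendsto (fun n : ℕ => F (q p + 1/(n+1))) atTop (nhds (F (q p))) := by
      have := (ENNReal.tendsto_toReal (measure_ne_top ν _)).comp hseq
      simpa [hFdef, Function.comp_def] using this
    apply ge_of_tendsto htoReal
    apply Eventually.of_forall
    intro n
    have hlt : q p < q p + 1/(n+1) := by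
      have : 0 < 1/((n:ℝ)+1) := by positivity
      linarith
    obtain ⟨s, hsS, hs⟩ := (csInf_lt_iff hbdd hne).1 hlt
    exact le_trans hsS (hFmono hs.le)
  have hFlt : ∀ p ∈ Ioo (0:ℝ) 1, ∀ x, x < q p → F x < p := by
    intro p hp x hx
    by_contra h
    push_neg at h
    have : q p ≤ x := csInf_le ⟨0, fun y hy => hSbdd p hp.1 y hy⟩ h
    linarith
  have hGq : ∀ p ∈ Ioo (0:ℝ) 1, G (q p) ≤ 1 - p := by
    intro p hp
    have := hFq p hp
    have := hFG (q p)
    linarith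
  have hGlt : ∀ p ∈ Ioo (0:ℝ) 1, ∀ x, x < q p → 1 - p < G x := by
    intro p hp x hx
    have := hFlt p hp x hx
    have := hFG x
    linarith
  -- q tends to infinity
  have hqtop : Tendsto q (nhdsWithin 1 (Iio 1)) atTop := by
    rw [tendsto_atTop]
    intro M
    have hFM : F M < 1 := by
      have h1 := hpos M
      have h2 := hFG M
      linarith
    filter_upwards [Ioo_mem_nhdsLT hFM, hmem34] with p hp hp34
    have hne := hSne p hp.2
    apply le_csInf hne
    intro x hx
    by_contra hxM
    push_neg at hxM
    have : F x ≤ F M := hFmono hxM.le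
    have hpFx : p ≤ F x := hx
    linarith [hp.1]
  -- ratio1 : G (e p) / (1 - p) → α - 1
  have ratio1 : Tendsto (fun p => G (e p) / (1 - p)) (nhdsWithin 1 (Iio 1)) (nhds (α - 1)) := by
    have hW : Tendsto (fun p => (∫ s in Ioi (e p), G s) / (e p * G (e p)))
        (nhdsWithin 1 (Iio 1)) (nhds (1/(α-1))) := hkar.comp hetop
    have hWinv : Tendsto (fun p => ((∫ s in Ioi (e p), G s) / (e p * G (e p)))⁻¹)
        (nhdsWithin 1 (Iio 1)) (nhds (α - 1)) := by
      have := hW.inv₀ (by positivity)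
      simpa using this
    have hterm2 : Tendsto (fun p => 1 - μ0 / e p) (nhdsWithin 1 (Iio 1)) (nhds 1) := by
      have h0 : Tendsto (fun p => μ0 / e p) (nhdsWithin 1 (Iio 1)) (nhds 0) :=
        tendsto_const_nhds.div_atTop hetop
      have h1 : Tendsto (fun p : ℝ => 1 - μ0 / e p) (nhdsWithin 1 (Iio 1)) (nhds (1 - 0)) :=
        Tendsto.sub tendsto_const_nhds h0
      simpa using h1
    have hterm3 : Tendsto (fun p : ℝ => (2*p - 1)⁻¹) (nhdsWithin 1 (Iio 1)) (nhds 1) := by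
      have h1 : Tendsto (fun p : ℝ => 2*p - 1) (nhdsWithin 1 (Iio 1)) (nhds 1) := by
        have hc : Continuous (fun p : ℝ => 2*p - 1) := (continuous_const.mul continuous_id).sub continuous_const
        have h2 := hc.tendsto 1
        norm_num at h2
        exact h2.mono_left nhdsWithin_le_nhds
      have := h1.inv₀ one_ne_zero
      simpa using this
    have hprod := (hWinv.mul hterm2).mul hterm3
    rw [show (α - 1) * 1 * 1 = α - 1 by ring] at hprod
    apply hprod.congr'
    filter_upwards [hmem34, hetop.eventually_ge_atTop 1] with p hp34 he1
    have hpIoo : p ∈ Ioo (0:ℝ) 1 := ⟨by linarith [hp34.1], hp34.2⟩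
    have hkey := heq p hpIoo
    have hU : 0 < ∫ s in Ioi (e p), G s := hUpos (e p) (by linarith)
    have hGe : 0 < G (e p) := hpos (e p)
    have hep : (0:ℝ) < e p := by linarith
    have h1ppos : (0:ℝ) < 1 - p := by linarith [hp34.2]
    have h2ppos : (0:ℝ) < 2*p - 1 := by linarith [hp34.1]
    have hemu0 : 0 < e p - μ0 := by nlinarith
    field_simp
    nlinarith [hkey, mul_pos hU hGe, mul_pos hep hGe]
  -- final computation
  set c : ℝ := (α - 1) ^ (-(1/α)) with hcdef
  have hcpos : 0 < c := Real.rpow_pos_of_pos hα0 _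
  have hcinv : c ^ (-α) = α - 1 := by
    rw [hcdef, ← Real.rpow_mul hα0.le]
    rw [show (-(1/α)) * (-α) = 1 by field_simp]
    exact Real.rpow_one _
  rw [Metric.tendsto_nhds]
  intro δ hδ
  set d : ℝ := 1 + δ/(2*c+2) with hddef
  have hd1 : 1 < d := by
    rw [hddef]
    have : 0 < δ/(2*c+2) := by positivity
    linarith
  have hxpos : 0 < δ/(2*c+2) := by positivity
  have hkey : c * (δ/(2*c+2)) < δ := by
    rw [mul_div_assoc', div_lt_iff₀ (by linarith : (0:ℝ) < 2*c+2)]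
    nlinarith [mul_pos hcpos hδ]
  have hcd1 : c*d < c + δ := by
    rw [hddef]
    nlinarith [hkey]
  have hcd2 : c - δ < c/d := by
    rw [hddef, lt_div_iff₀ (by positivity : (0:ℝ) < 1 + δ/(2*c+2))]
    nlinarith [hkey, mul_pos hδ hxpos]
  -- upper claim
  have hupper : ∀ᶠ p in nhdsWithin (1:ℝ) (Iio 1), e p ≤ c*d*(q p) := by
    set k : ℝ := (c*d) ^ (-α) with hkdef
    have hkpos : 0 < k := Real.rpow_pos_of_pos (by positivity) _
    have hkd : k < α - 1 := by
      rw [← hcinv, hkdef]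
      exact Real.rpow_lt_rpow_of_neg hcpos (lt_mul_of_one_lt_right hcpos hd1) (by linarith)
    have hcd0 : (0:ℝ) < c*d := mul_pos hcpos (by linarith)
    have hT1 : Tendsto (fun p => G (q p * (c*d)) / G (q p)) (nhdsWithin 1 (Iio 1))
        (nhds k) := (hrv (c*d) hcd0).comp hqtop
    have hE1 := hT1.eventually (eventually_lt_nhds (show k < k + (α-1-k)/2 by linarith))
    have hE2 := ratio1.eventually (eventually_gt_nhds
      (show k + (α-1-k)/2 < α - 1 by linarith))
    filter_upwards [hE1, hE2, hmem34] with p h1 h2 hp34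
    have hpIoo : p ∈ Ioo (0:ℝ) 1 := ⟨by linarith [hp34.1], hp34.2⟩
    by_contra hcon
    push_neg at hcon
    have hGanti' : G (e p) ≤ G (q p * (c*d)) := hGanti (by nlinarith [hcon])
    have hGqb := hGq p hpIoo
    have h1ppos : (0:ℝ) < 1 - p := by linarith [hp34.2]
    have hGqpos := hpos (q p)
    have hkε : (0:ℝ) < k + (α-1-k)/2 := by linarith
    rw [div_lt_iff₀ hGqpos] at h1
    rw [lt_div_iff₀ h1ppos] at h2
    nlinarith
  -- lower claim
  have hlower : ∀ᶠ p in nhdsWithin (1:ℝ) (Iio 1), (c/d)*(q p) ≤ e p := by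
    set c' : ℝ := (1/d + 1)/2 with hc'def
    have hd0 : (0:ℝ) < d := by linarith
    have hc'0 : 0 < c' := by
      rw [hc'def]; positivity
    have hc'1 : c' < 1 := by
      rw [hc'def]
      have : 1/d < 1 := by rw [div_lt_one hd0]; linarith
      linarith
    have hdc' : 1 < d * c' := by
      rw [hc'def]
      have : d * ((1/d + 1)/2) = (1 + d)/2 := by field_simp
      rw [this]
      linarith
    set k₂ : ℝ := ((c/d)/c') ^ (-α) with hk₂def
    have hbase : (c/d)/c' < c := by
      rw [div_div]
      apply div_lt_self hcpos
      linarith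
    have hbasepos : 0 < (c/d)/c' := by positivity
    have hk₂ : α - 1 < k₂ := by
      rw [← hcinv, hk₂def]
      exact Real.rpow_lt_rpow_of_neg hbasepos hbase (by linarith)
    have hT2 : Tendsto (fun p => G (q p * (c/d)) / G (q p * c')) (nhdsWithin 1 (Iio 1))
        (nhds k₂) := by
      have ha := (hrv (c/d) (by positivity)).comp hqtop
      have hb := (hrv c' hc'0).comp hqtop
      have hbne : (c' : ℝ) ^ (-α) ≠ 0 := ne_of_gt (Real.rpow_pos_of_pos hc'0 _)
      have hdiv := ha.div hb hbne
      have hptwise : ∀ p, (G (q p * (c/d)) / G (q p)) / (G (q p * c') / G (q p))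
          = G (q p * (c/d)) / G (q p * c') := by
        intro p
        have h1 := hpos (q p)
        have h2 := hpos (q p * c')
        exact div_div_div_cancel_right₀ h1.ne' _ _
      have hval : (c/d) ^ (-α) / (c') ^ (-α) = k₂ := by
        rw [hk₂def, Real.div_rpow (by positivity) hc'0.le]
      rw [← hval]
      exact hdiv.congr hptwise
    have hE3 := hT2.eventually (eventually_gt_nhds
      (show k₂ - (k₂-(α-1))/2 < k₂ by linarith))
    have hE4 := ratio1.eventually (eventually_lt_nhds
      (show α - 1 < k₂ - (k₂-(α-1))/2 by linarith))
    filter_upwards [hE3, hE4, hmem34, hqtop.eventually_ge_atTop 1] with p h3 h4 hp34 hq1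
    have hpIoo : p ∈ Ioo (0:ℝ) 1 := ⟨by linarith [hp34.1], hp34.2⟩
    by_contra hcon
    push_neg at hcon
    have hqpos : (0:ℝ) < q p := by linarith
    have h1ppos : (0:ℝ) < 1 - p := by linarith [hp34.2]
    have hGanti' : G (q p * (c/d)) ≤ G (e p) := hGanti (by nlinarith [hcon])
    have hGc' : 1 - p < G (q p * c') := by
      apply hGlt p hpIoo
      nlinarith
    have hGc'pos := hpos (q p * c')
    have hkε : (0:ℝ) < k₂ - (k₂-(α-1))/2 := by linarith
    rw [lt_div_iff₀ hGc'pos] at h3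
    rw [div_lt_iff₀ h1ppos] at h4
    nlinarith
  -- combine
  filter_upwards [hupper, hlower, hqtop.eventually_ge_atTop 1] with p hu hl hq1
  have hqpos : (0:ℝ) < q p := by linarith
  rw [Real.dist_eq, abs_lt]
  have hub : e p / q p ≤ c*d := by
    rw [div_le_iff₀ hqpos]
    linarith
  have hlb : c/d ≤ e p / q p := by
    rw [le_div_iff₀ hqpos]
    linarith
  constructor <;> nlinarith
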